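/- For every λ ∈ (0, λ_max], the active set I_λ = {j ∈ {1,…,p} : |⟨θ*_λ, x̄^j⟩| = mλ} is nonempty. -/

import Mathlib

/-- The dual objective `g(θ) = (1/m) Σ_i [θ_i log θ_i + (1−θ_i) log(1−θ_i)]`. -/
noncomputable def g (m : ℕ) (θ : Fin m → ℝ) : ℝ :=
  (1 / (m : ℝ)) * ∑ i, (θ i * Real.log (θ i) + (1 - θ i) * Real.log (1 - θ i))

/-- The gradient of `g`, componentwise `(1/m) log(θ_i/(1−θ_i))`. -/
noncomputable def gradg (m : ℕ) (θ : Fin m → ℝ) : Fin m → ℝ :=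
  fun i => (1 / (m : ℝ)) * Real.log (θ i / (1 - θ i))
/-- The dual feasible set `F_λ`: componentwise in `(0,1)`, `|⟨θ, x̄^j⟩| ≤ mλ` for all
columns `x̄^j = X j`, and `⟨θ, b⟩ = 0`. -/
def Feas (m p : ℕ) (X : Fin p → Fin m → ℝ) (b : Fin m → ℝ) (lam : ℝ) :
    Set (Fin m → ℝ) :=
  {θ | (∀ i, 0 < θ i ∧ θ i < 1) ∧ (∀ j, |∑ i, θ i * X j i| ≤ (m : ℝ) * lam) ∧
    ∑ i, θ i * b i = 0}
open scoped Classical in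
/-- `m⁺ = #{i : b_i = 1}`. -/
noncomputable def mPlus (m : ℕ) (b : Fin m → ℝ) : ℕ :=
  (Finset.univ.filter (fun i => b i = 1)).card

open scoped Classical in
/-- `m⁻ = #{i : b_i = −1}`. -/
noncomputable def mMinus (m : ℕ) (b : Fin m → ℝ) : ℕ :=
  (Finset.univ.filter (fun i => b i = -1)).card

open scoped Classical in
/-- `θ_max`, with `(θ_max)_i = m⁻/m` if `b_i = 1` and `m⁺/m` if `b_i = −1`. -/
noncomputable def thetaMax (m : ℕ) (b : Fin m → ℝ) : Fin m → ℝ :=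
  fun i => if b i = 1 then (mMinus m b : ℝ) / m else (mPlus m b : ℝ) / m

/-- `λ_max = (1/m) max_j |⟨θ_max, x̄^j⟩|`. -/
noncomputable def lamMax (m p : ℕ) (X : Fin p → Fin m → ℝ) (b : Fin m → ℝ) : ℝ :=
  (1 / (m : ℝ)) * ⨆ j : Fin p, |∑ i, thetaMax m b i * X j i|

lemma phi_tangent_le {a x : ℝ} (ha0 : 0 < a) (ha1 : a < 1) (hx0 : 0 < x) (hx1 : x < 1) :
    a * Real.log a + (1 - a) * Real.log (1 - a)
      + (Real.log a - Real.log (1 - a)) * (x - a)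
      ≤ x * Real.log x + (1 - x) * Real.log (1 - x) := by
  have e1 : x * (Real.log a - Real.log x) ≤ a - x := by
    have h := Real.log_le_sub_one_of_pos (show (0:ℝ) < a / x by positivity)
    rw [Real.log_div ha0.ne' hx0.ne'] at h
    have h2 := mul_le_mul_of_nonneg_left h hx0.le
    have h3 : x * (a / x - 1) = a - x := by field_simp
    linarith
  have e2 : (1 - x) * (Real.log (1 - a) - Real.log (1 - x)) ≤ x - a := by
    have h := Real.log_le_sub_one_of_pos (show (0:ℝ) < (1 - a) / (1 - x) by
      have : 0 < 1 - a := by linarith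
      have : 0 < 1 - x := by linarith
      positivity)
    rw [Real.log_div (by linarith : (1:ℝ) - a ≠ 0) (by linarith : (1:ℝ) - x ≠ 0)] at h
    have h2 := mul_le_mul_of_nonneg_left h (by linarith : (0:ℝ) ≤ 1 - x)
    have h3 : (1 - x) * ((1 - a) / (1 - x) - 1) = x - a := by
      rw [mul_sub, mul_one, mul_div_cancel₀ _ (by linarith : (1:ℝ) - x ≠ 0)]; ring
    linarith
  nlinarith [e1, e2]

lemma phi_tangent_lt {a x : ℝ} (ha0 : 0 < a) (ha1 : a < 1) (hx0 : 0 < x) (hx1 : x < 1)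
    (hne : a ≠ x) :
    a * Real.log a + (1 - a) * Real.log (1 - a)
      + (Real.log a - Real.log (1 - a)) * (x - a)
      < x * Real.log x + (1 - x) * Real.log (1 - x) := by
  have e1 : x * (Real.log a - Real.log x) < a - x := by
    have hd : a / x ≠ 1 := by
      intro h
      exact hne (by field_simp at h; linarith)
    have h := Real.log_lt_sub_one_of_pos (show (0:ℝ) < a / x by positivity) hd
    rw [Real.log_div ha0.ne' hx0.ne'] at h
    have h2 := mul_lt_mul_of_pos_left h hx0
    have h3 : x * (a / x - 1) = a - x := by field_simp
    linarith
  have e2 : (1 - x) * (Real.log (1 - a) - Real.log (1 - x)) ≤ x - a := by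
    have h := Real.log_le_sub_one_of_pos (show (0:ℝ) < (1 - a) / (1 - x) by
      have : 0 < 1 - a := by linarith
      have : 0 < 1 - x := by linarith
      positivity)
    rw [Real.log_div (by linarith : (1:ℝ) - a ≠ 0) (by linarith : (1:ℝ) - x ≠ 0)] at h
    have h2 := mul_le_mul_of_nonneg_left h (by linarith : (0:ℝ) ≤ 1 - x)
    have h3 : (1 - x) * ((1 - a) / (1 - x) - 1) = x - a := by
      rw [mul_sub, mul_one, mul_div_cancel₀ _ (by linarith : (1:ℝ) - x ≠ 0)]; ring
    linarith
  nlinarith [e1, e2]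

open Finset in
lemma sum_tangent_le {m : ℕ} (a x : Fin m → ℝ)
    (ha : ∀ i, 0 < a i ∧ a i < 1) (hx : ∀ i, 0 < x i ∧ x i < 1) :
    ∑ i, (a i * Real.log (a i) + (1 - a i) * Real.log (1 - a i))
      + ∑ i, (Real.log (a i) - Real.log (1 - a i)) * (x i - a i)
      ≤ ∑ i, (x i * Real.log (x i) + (1 - x i) * Real.log (1 - x i)) := by
  rw [← Finset.sum_add_distrib]
  exact Finset.sum_le_sum fun i _ =>
    phi_tangent_le (ha i).1 (ha i).2 (hx i).1 (hx i).2

open Finset in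
lemma sum_tangent_lt {m : ℕ} (a x : Fin m → ℝ)
    (ha : ∀ i, 0 < a i ∧ a i < 1) (hx : ∀ i, 0 < x i ∧ x i < 1) (hne : a ≠ x) :
    ∑ i, (a i * Real.log (a i) + (1 - a i) * Real.log (1 - a i))
      + ∑ i, (Real.log (a i) - Real.log (1 - a i)) * (x i - a i)
      < ∑ i, (x i * Real.log (x i) + (1 - x i) * Real.log (1 - x i)) := by
  rw [← Finset.sum_add_distrib]
  obtain ⟨i0, hi0⟩ := Function.ne_iff.mp hne
  refine Finset.sum_lt_sum (fun i _ => phi_tangent_le (ha i).1 (ha i).2 (hx i).1 (hx i).2)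
    ⟨i0, Finset.mem_univ i0, phi_tangent_lt (ha i0).1 (ha i0).2 (hx i0).1 (hx i0).2 hi0⟩

set_option maxHeartbeats 1600000 in
/-- Lemma 3: for every `λ ∈ (0, λ_max]`, the active set
`I_λ = {j : |⟨θ*_λ, x̄^j⟩| = mλ}` is nonempty. -/
theorem slores_active_set_nonempty (m p : ℕ) (hm : 1 ≤ m) (hp : 1 ≤ p)
    (X : Fin p → Fin m → ℝ) (b : Fin m → ℝ) (hb : ∀ i, b i = 1 ∨ b i = -1)
    (hmp : 1 ≤ mPlus m b) (hmm : 1 ≤ mMinus m b) (hlmax : 0 < lamMax m p X b)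
    (lam : ℝ) (hlam : 0 < lam) (hle : lam ≤ lamMax m p X b)
    (θs : Fin m → ℝ)
    (hθs : θs ∈ Feas m p X b lam ∧ ∀ θ ∈ Feas m p X b lam, g m θs ≤ g m θ) :
    ∃ j : Fin p, |∑ i, θs i * X j i| = (m : ℝ) * lam := by
  classical
  obtain ⟨hfeas, hmin⟩ := hθs
  obtain ⟨hbox, hineq, hhyp⟩ := hfeas
  by_contra hcon
  push_neg at hcon
  have hstrict : ∀ j, |∑ i, θs i * X j i| < (m : ℝ) * lam :=
    fun j => lt_of_le_of_ne (hineq j) (hcon j)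
  have hm0 : (0 : ℝ) < m := by exact_mod_cast hm
  haveI hnep : Nonempty (Fin p) := ⟨⟨0, hp⟩⟩
  -- cardinalities
  have hcard : mPlus m b + mMinus m b = m := by
    have h1 : (Finset.univ.filter fun i : Fin m => b i = -1)
        = (Finset.univ.filter fun i : Fin m => ¬ b i = 1) := by
      apply Finset.filter_congr
      intro i _
      rcases hb i with h | h <;> simp [h] <;> norm_num
    unfold mPlus mMinus
    rw [h1]
    simpa using Finset.card_filter_add_card_filter_not
      (s := (Finset.univ : Finset (Fin m))) (p := fun i => b i = 1)
  have hcardR : (mPlus m b : ℝ) + (mMinus m b : ℝ) = m := by exact_mod_cast hcard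
  have hmpR : (1 : ℝ) ≤ (mPlus m b : ℝ) := by exact_mod_cast hmp
  have hmmR : (1 : ℝ) ≤ (mMinus m b : ℝ) := by exact_mod_cast hmm
  -- thetaMax facts
  have hT : ∀ i, 0 < thetaMax m b i ∧ thetaMax m b i < 1 := by
    intro i
    unfold thetaMax
    split <;> constructor
    · positivity
    · rw [div_lt_one hm0]; linarith
    · positivity
    · rw [div_lt_one hm0]; linarith
  have h1T : ∀ i, 1 - thetaMax m b i
      = if b i = 1 then (mPlus m b : ℝ) / m else (mMinus m b : ℝ) / m := by
    intro i
    unfold thetaMax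
    split <;> field_simp <;> linarith
  set c : ℝ := Real.log ((mMinus m b : ℝ) / m) - Real.log ((mPlus m b : ℝ) / m) with hc
  have hgradT : ∀ i, Real.log (thetaMax m b i) - Real.log (1 - thetaMax m b i) = c * b i := by
    intro i
    rcases hb i with h | h
    · rw [h1T i, if_pos h]
      unfold thetaMax
      rw [if_pos h, h, hc]
      ring
    · have h1 : b i ≠ 1 := by rw [h]; norm_num
      rw [h1T i, if_neg h1]
      unfold thetaMax
      rw [if_neg h1, h, hc]
      ring
  have hThyp : ∑ i, thetaMax m b i * b i = 0 := by
    rw [← Finset.sum_filter_add_sum_filter_not Finset.univ (fun i => b i = 1)]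
    have e1 : ∀ i ∈ Finset.univ.filter (fun i : Fin m => b i = 1),
        thetaMax m b i * b i = (mMinus m b : ℝ) / m := by
      intro i hi
      simp only [Finset.mem_filter] at hi
      unfold thetaMax
      rw [if_pos hi.2, hi.2, mul_one]
    have e2 : ∀ i ∈ Finset.univ.filter (fun i : Fin m => ¬ b i = 1),
        thetaMax m b i * b i = -((mPlus m b : ℝ) / m) := by
      intro i hi
      simp only [Finset.mem_filter] at hi
      have h : b i = -1 := (hb i).resolve_left hi.2
      unfold thetaMax
      rw [if_neg hi.2, h]
      ring
    rw [Finset.sum_congr rfl e1, Finset.sum_congr rfl e2,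
      Finset.sum_const, Finset.sum_const]
    have hc1 : (Finset.univ.filter fun i : Fin m => b i = 1).card = mPlus m b := rfl
    have hc2 : (Finset.univ.filter fun i : Fin m => ¬ b i = 1).card = mMinus m b := by
      unfold mMinus
      congr 1
      apply Finset.filter_congr
      intro i _
      rcases hb i with h | h <;> simp [h] <;> norm_num
    rw [hc1, hc2]
    simp only [nsmul_eq_mul]
    field_simp
    ring
  -- supremum attained
  obtain ⟨j0, _, hj0⟩ := Finset.exists_max_image (Finset.univ : Finset (Fin p))
    (fun j => |∑ i, thetaMax m b i * X j i|) ⟨⟨0, hp⟩, Finset.mem_univ _⟩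
  have hj0' : ∀ j : Fin p, |∑ i, thetaMax m b i * X j i| ≤ |∑ i, thetaMax m b i * X j0 i| :=
    fun j => hj0 j (Finset.mem_univ j)
  have hsup : (⨆ j : Fin p, |∑ i, thetaMax m b i * X j i|) = |∑ i, thetaMax m b i * X j0 i| := by
    exact le_antisymm (ciSup_le hj0')
      (le_ciSup (f := fun j : Fin p => |∑ i, thetaMax m b i * X j i|)
        ((Set.finite_range _).bddAbove) j0)
  have hMsup : (m : ℝ) * lamMax m p X b = |∑ i, thetaMax m b i * X j0 i| := by
    unfold lamMax
    rw [hsup]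
    field_simp
  have hBj : ∀ j : Fin p, |∑ i, thetaMax m b i * X j i| ≤ (m : ℝ) * lamMax m p X b :=
    fun j => hMsup ▸ hj0' j
  by_cases hTs : θs = thetaMax m b
  · have h1 := hstrict j0
    rw [hTs] at h1
    have h2 : (m : ℝ) * lam ≤ (m : ℝ) * lamMax m p X b :=
      mul_le_mul_of_nonneg_left hle hm0.le
    rw [hMsup] at h2
    linarith
  · -- strict inequality g(thetaMax) < g(θs) at the sum level
    have hmid : ∑ i, (Real.log (thetaMax m b i) - Real.log (1 - thetaMax m b i))
        * (θs i - thetaMax m b i) = 0 := by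
      have e : ∀ i ∈ Finset.univ,
          (Real.log (thetaMax m b i) - Real.log (1 - thetaMax m b i)) * (θs i - thetaMax m b i)
            = c * (θs i * b i) - c * (thetaMax m b i * b i) := by
        intro i _
        rw [hgradT i]; ring
      rw [Finset.sum_congr rfl e, Finset.sum_sub_distrib, ← Finset.mul_sum, ← Finset.mul_sum,
        hhyp, hThyp]
      ring
    have hlt : ∑ i, (thetaMax m b i * Real.log (thetaMax m b i)
          + (1 - thetaMax m b i) * Real.log (1 - thetaMax m b i))
        < ∑ i, (θs i * Real.log (θs i) + (1 - θs i) * Real.log (1 - θs i)) := by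
      have := sum_tangent_lt (thetaMax m b) θs hT hbox (fun h => hTs h.symm)
      rw [hmid] at this
      linarith
    -- choose t
    obtain ⟨j1, _, hj1⟩ := Finset.exists_min_image (Finset.univ : Finset (Fin p))
      (fun j => (m : ℝ) * lam - |∑ i, θs i * X j i|) ⟨⟨0, hp⟩, Finset.mem_univ _⟩
    set δ : ℝ := (m : ℝ) * lam - |∑ i, θs i * X j1 i| with hδdef
    have hδ : 0 < δ := by
      have := hstrict j1
      simp only [hδdef]
      linarith
    have hAj : ∀ j : Fin p, |∑ i, θs i * X j i| ≤ (m : ℝ) * lam - δ := by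
      intro j
      have := hj1 j (Finset.mem_univ j)
      linarith
    set M : ℝ := (m : ℝ) * lamMax m p X b with hMdef
    have hM : 0 < M := mul_pos hm0 hlmax
    set t : ℝ := min 1 (δ / M) with htdef
    have ht0 : 0 < t := lt_min one_pos (div_pos hδ hM)
    have ht1 : t ≤ 1 := min_le_left _ _
    have htM : t * M ≤ δ := by
      have h := min_le_right 1 (δ / M)
      calc t * M ≤ (δ / M) * M := mul_le_mul_of_nonneg_right h hM.le
        _ = δ := by field_simp
    set θt : Fin m → ℝ := fun i => (1 - t) * θs i + t * thetaMax m b i with hθtdef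
    have hsplit : ∀ v : Fin m → ℝ,
        ∑ i, θt i * v i = (1 - t) * ∑ i, θs i * v i + t * ∑ i, thetaMax m b i * v i := by
      intro v
      rw [Finset.mul_sum, Finset.mul_sum, ← Finset.sum_add_distrib]
      refine Finset.sum_congr rfl fun i _ => ?_
      simp only [hθtdef]
      ring
    have hθtbox : ∀ i, 0 < θt i ∧ θt i < 1 := by
      intro i
      obtain ⟨h1, h2⟩ := hbox i
      obtain ⟨h3, h4⟩ := hT i
      have e : θt i = (1 - t) * θs i + t * thetaMax m b i := rfl
      constructor
      · have q1 := mul_nonneg (by linarith : (0:ℝ) ≤ 1 - t) h1.le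
        have q2 := mul_pos ht0 h3
        linarith
      · have q1 := mul_le_mul_of_nonneg_left h2.le (by linarith : (0:ℝ) ≤ 1 - t)
        have q2 := mul_lt_mul_of_pos_left h4 ht0
        linarith
    have hθtfeas : θt ∈ Feas m p X b lam := by
      refine ⟨hθtbox, ?_, ?_⟩
      · intro j
        rw [hsplit (X j)]
        have habs : |(1 - t) * ∑ i, θs i * X j i + t * ∑ i, thetaMax m b i * X j i|
            ≤ (1 - t) * |∑ i, θs i * X j i| + t * |∑ i, thetaMax m b i * X j i| := by
          calc |(1 - t) * ∑ i, θs i * X j i + t * ∑ i, thetaMax m b i * X j i|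
              ≤ |(1 - t) * ∑ i, θs i * X j i| + |t * ∑ i, thetaMax m b i * X j i| :=
                abs_add_le _ _
            _ = (1 - t) * |∑ i, θs i * X j i| + t * |∑ i, thetaMax m b i * X j i| := by
                rw [abs_mul, abs_mul, abs_of_nonneg (by linarith : (0:ℝ) ≤ 1 - t),
                  abs_of_nonneg ht0.le]
        have hA := hAj j
        have hBM : |∑ i, thetaMax m b i * X j i| ≤ M := hBj j
        have habs0 : (0:ℝ) ≤ |∑ i, θs i * X j i| := abs_nonneg _
        have q1 := mul_le_mul_of_nonneg_left hBM ht0.le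
        have q2 := mul_nonneg ht0.le habs0
        linarith
      · rw [hsplit b, hhyp, hThyp]
        ring
    -- minimality gives sum inequality
    have hminS : ∑ i, (θs i * Real.log (θs i) + (1 - θs i) * Real.log (1 - θs i))
        ≤ ∑ i, (θt i * Real.log (θt i) + (1 - θt i) * Real.log (1 - θt i)) := by
      have h := hmin θt hθtfeas
      unfold g at h
      have h1m : (0:ℝ) < 1 / m := by positivity
      exact (mul_le_mul_iff_right₀ h1m).mp h
    -- convexity via two tangent inequalities at θt
    set D : ℝ := ∑ i, (Real.log (θt i) - Real.log (1 - θt i)) * (θs i - thetaMax m b i)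
      with hDdef
    have hD1 : ∑ i, (Real.log (θt i) - Real.log (1 - θt i)) * (θs i - θt i) = t * D := by
      rw [hDdef, Finset.mul_sum]
      refine Finset.sum_congr rfl fun i _ => ?_
      simp only [hθtdef]
      ring
    have hD2 : ∑ i, (Real.log (θt i) - Real.log (1 - θt i)) * (thetaMax m b i - θt i)
        = -((1 - t) * D) := by
      have e1 : ∑ i, (-(1-t)) * ((Real.log (θt i) - Real.log (1 - θt i))
          * (θs i - thetaMax m b i)) = -((1 - t) * D) := by
        rw [← Finset.mul_sum, ← hDdef]
        ring
      rw [← e1]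
      refine Finset.sum_congr rfl fun i _ => ?_
      simp only [hθtdef]
      ring
    have h1 := sum_tangent_le θt θs hθtbox hbox
    have h2 := sum_tangent_le θt (thetaMax m b) hθtbox hT
    rw [hD1] at h1
    rw [hD2] at h2
    nlinarith [mul_le_mul_of_nonneg_left h1 (by linarith : (0:ℝ) ≤ 1 - t),
      mul_le_mul_of_nonneg_left h2 ht0.le, hminS, hlt,
      mul_lt_mul_of_pos_left hlt ht0]
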